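/- Let n ≥ 1, δ ∈ (0,1], and C₁, C₂ ∈ (0,∞). Then there exist δ' ∈ (0,∞), depending only on δ and n, and A ∈ (0,∞), depending only on δ, n, C₁, and C₂, with the following property. Let ζ ∈ (0,1], let Ξ be a nonnegative Borel measure on ℝⁿ × ℝⁿ such that: (a) Ξ is supported in the set {(y,z) : |y| ≤ C₁, |z| ≤ C₁, |y − z| ≤ C₁ζ}; and (b) the pushforwards of Ξ under the first and second coordinate projections are each bounded above by C₂ times Lebesgue measure on ℝⁿ. Let h ∈ L¹(ℝⁿ) and suppose C_h ∈ [0,∞) satisfies ∫_{ℝⁿ} |h(y − z) − h(y)| dy ≤ C_h |z|^δ for all z ∈ ℝⁿ. Then ∫_{ℝⁿ×ℝⁿ} |h(y) − h(z)| dΞ(y,z) ≤ A ζ^{δ'} (‖h‖_{L¹} + C_h). -/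

import Mathlib

set_option maxHeartbeats 1000000

open MeasureTheory Metric ENNReal

private abbrev EE (n : ℕ) := EuclideanSpace ℝ (Fin n)

private lemma aux_pow_sub_pow (m : ℕ) : ∀ x y : ℝ, 0 ≤ y → y ≤ x →
    x ^ (m+1) - y ^ (m+1) ≤ ((m:ℝ)+1) * x ^ m * (x - y) := by
  induction m with
  | zero => intro x y hy hxy; norm_num
  | succ m ih =>
    intro x y hy hxy
    have hx : 0 ≤ x := hy.trans hxy
    have h1 := ih x y hy hxy
    have hyp : y ^ (m+1) ≤ x ^ (m+1) := pow_le_pow_left₀ hy hxy _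
    have key : x ^ (m+1+1) - y ^ (m+1+1)
        = x * (x ^ (m+1) - y ^ (m+1)) + (x - y) * y ^ (m+1) := by ring
    calc x ^ (m+1+1) - y ^ (m+1+1)
        = x * (x ^ (m+1) - y ^ (m+1)) + (x - y) * y ^ (m+1) := key
      _ ≤ x * (((m:ℝ)+1) * x ^ m * (x - y)) + (x - y) * x ^ (m+1) := by
          gcongr
      _ = ((↑(m+1):ℝ)+1) * x ^ (m+1) * (x - y) := by push_cast; ring

theorem stmt_13 (n : ℕ) (hn : 1 ≤ n) (δ : ℝ) (hδ : δ ∈ Set.Ioc (0:ℝ) 1)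
    (C₁ C₂ : ℝ) (hC₁ : 0 < C₁) (hC₂ : 0 < C₂) :
    ∃ δ' > (0:ℝ), ∃ A > (0:ℝ),
      ∀ ζ : ℝ, ζ ∈ Set.Ioc (0:ℝ) 1 →
      ∀ Ξ : Measure (EuclideanSpace ℝ (Fin n) × EuclideanSpace ℝ (Fin n)),
        Ξ {p | ¬ (‖p.1‖ ≤ C₁ ∧ ‖p.2‖ ≤ C₁ ∧ ‖p.1 - p.2‖ ≤ C₁ * ζ)} = 0 →
        Ξ.map Prod.fst ≤ (ENNReal.ofReal C₂) • volume →
        Ξ.map Prod.snd ≤ (ENNReal.ofReal C₂) • volume →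
      ∀ (h : EuclideanSpace ℝ (Fin n) → ℝ) (Ch : ℝ),
        Integrable h → 0 ≤ Ch →
        (∀ z : EuclideanSpace ℝ (Fin n), (∫ y, |h (y - z) - h y|) ≤ Ch * ‖z‖ ^ δ) →
        (∫⁻ p, ENNReal.ofReal |h p.1 - h p.2| ∂Ξ)
          ≤ ENNReal.ofReal (A * ζ ^ δ' * ((∫ y, |h y|) + Ch)) := by
  obtain ⟨hδ0, hδ1⟩ := hδ
  set K : ℝ := max C₁ 1 with hKdef
  have hK1 : (1:ℝ) ≤ K := le_max_right _ _
  have hKC : C₁ ≤ K := le_max_left _ _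
  have hK0 : (0:ℝ) < K := lt_of_lt_of_le one_pos hK1
  have hKδ0 : (0:ℝ) < K ^ δ := Real.rpow_pos_of_pos hK0 δ
  refine ⟨δ/2, by linarith, 2*C₂*K^δ + 2*C₂*(n:ℝ)*2^n, by positivity, ?_⟩
  intro ζ hζ Ξ hsupp hfst hsnd f Ch hInt hCh0 hmod
  obtain ⟨hζ0, hζ1⟩ := hζ
  haveI : Nonempty (Fin n) := ⟨⟨0, hn⟩⟩
  set A : ℝ := 2*C₂*K^δ + 2*C₂*(n:ℝ)*2^n with hAdef
  -- scales
  set s : ℝ := ζ ^ ((1:ℝ)/2) with hsdef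
  have hs0 : 0 < s := Real.rpow_pos_of_pos hζ0 _
  have hs1 : s ≤ 1 := Real.rpow_le_one hζ0.le hζ1 (by norm_num)
  have hss : s * s = ζ := by
    rw [hsdef, ← Real.rpow_add hζ0]; norm_num
  set t : ℝ := K * s with htdef
  have ht0 : 0 < t := mul_pos hK0 hs0
  set a : ℝ := C₁ * ζ with hadef
  have ha0 : 0 < a := mul_pos hC₁ hζ0
  have hast : a ≤ s * t := by
    rw [hadef, htdef, ← hss]; nlinarith
  have hat : a ≤ t := hast.trans (by nlinarith)
  -- measurable representative
  set g : EE n → ℝ := hInt.1.mk f with hgdef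
  have hgs : StronglyMeasurable g := hInt.1.stronglyMeasurable_mk
  have hgm : Measurable g := hgs.measurable
  have hhg : f =ᵐ[volume] g := hInt.1.ae_eq_mk
  have hg_int : Integrable g := hInt.congr hhg
  set L : ℝ := ∫ y, |f y| with hLdef
  have hL0 : 0 ≤ L := integral_nonneg fun y => abs_nonneg _
  have hgL : ∫ y, |g y| = L := by
    refine integral_congr_ae ?_
    filter_upwards [hhg] with y hy
    rw [hy]
  -- translations
  have hg_transl : ∀ y : EE n, Integrable (fun w => g (y + w)) := fun y =>
    ((measurePreserving_add_left volume y).integrable_comp hg_int.aestronglyMeasurable).mpr hg_int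
  have hg_transr : ∀ w : EE n, Integrable (fun y => g (y + w)) := fun w =>
    ((measurePreserving_add_right volume w).integrable_comp hg_int.aestronglyMeasurable).mpr hg_int
  -- modulus for g
  have hmodg : ∀ w : EE n, (∫ y, |g y - g (y + w)|) ≤ Ch * ‖w‖ ^ δ := by
    intro w
    have e1 : (∫ y, |g y - g (y + w)|) = ∫ y, |f (y - (-w)) - f y| := by
      refine integral_congr_ae ?_
      filter_upwards [hhg,
        (measurePreserving_add_right volume w).quasiMeasurePreserving.ae_eq_comp hhg] with y h1 h2
      simp only [Function.comp] at h2
      rw [sub_neg_eq_add, abs_sub_comm, h1, h2]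
    rw [e1]
    simpa using hmod (-w)
  -- volumes
  set ω : ℝ≥0∞ := volume (ball (0:EE n) 1) with hωdef
  set volB : ℝ≥0∞ := volume (ball (0:EE n) t) with hvolBdef
  have hball : ∀ (x : EE n) (r : ℝ), 0 ≤ r → volume (ball x r) = ENNReal.ofReal (r ^ n) * ω := by
    intro x r hr
    rw [hωdef, Measure.addHaar_ball _ _ hr, finrank_euclideanSpace_fin]
  have hcball : ∀ (x : EE n) (r : ℝ), 0 ≤ r →
      volume (closedBall x r) = ENNReal.ofReal (r ^ n) * ω := by
    intro x r hr
    rw [hωdef, Measure.addHaar_closedBall _ _ hr, finrank_euclideanSpace_fin]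
  have hvolB_pos : 0 < volB := measure_ball_pos _ _ ht0
  have hvolB_ne_top : volB ≠ ⊤ := measure_ball_lt_top.ne
  set Vr : ℝ := volB.toReal with hVrdef
  have hVr0 : 0 < Vr := ENNReal.toReal_pos hvolB_pos.ne' hvolB_ne_top
  have hofVr : ENNReal.ofReal Vr = volB := ENNReal.ofReal_toReal hvolB_ne_top
  have hVinv : ENNReal.ofReal Vr⁻¹ = volB⁻¹ := by
    rw [ENNReal.ofReal_inv_of_pos hVr0, hofVr]
  have hVinv_ne_top : volB⁻¹ ≠ ⊤ := ENNReal.inv_ne_top.mpr hvolB_pos.ne'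
  have hVcancel : volB⁻¹ * volB = 1 := ENNReal.inv_mul_cancel hvolB_pos.ne' hvolB_ne_top
  set B0 : Set (EE n) := ball (0:EE n) t with hB0def
  -- mollification
  set H : EE n → ℝ := fun y => Vr⁻¹ • ∫ w in B0, g (y + w) with hHdef
  have cov : ∀ y : EE n, (∫ w in B0, g (y + w)) = ∫ u in ball y t, g u := by
    intro y
    have him : (fun w => y + w) '' B0 = ball y t := by
      rw [hB0def, Set.image_add_left]
      ext u; simp [mem_ball, dist_eq_norm]
    rw [← him]
    exact ((measurePreserving_add_left volume y).setIntegral_image_emb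
      (measurableEmbedding_addLeft y) g B0).symm
  have hHs : StronglyMeasurable H := by
    have hFs : StronglyMeasurable fun q : EE n × EE n =>
        (Set.univ ×ˢ B0).indicator (fun q : EE n × EE n => g (q.1 + q.2)) q :=
      ((hgm.comp (measurable_fst.add measurable_snd)).indicator
        (MeasurableSet.univ.prod measurableSet_ball)).stronglyMeasurable
    have hint : ∀ y : EE n, (∫ w in B0, g (y + w))
        = ∫ w, (Set.univ ×ˢ B0).indicator (fun q : EE n × EE n => g (q.1 + q.2)) (y, w) := by
      intro y
      rw [← integral_indicator measurableSet_ball]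
      congr 1
      funext w
      by_cases hw : w ∈ B0
      · have hw' : ¬ t ≤ ‖w‖ := not_le.mpr (mem_ball_zero_iff.mp hw)
        simp [Set.indicator, hw, hw']
      · have hw' : ¬ ‖w‖ < t := fun h => hw (mem_ball_zero_iff.mpr h)
        simp [Set.indicator, hw, hw']
    have : H = fun y => Vr⁻¹ • ∫ w,
        (Set.univ ×ˢ B0).indicator (fun q : EE n × EE n => g (q.1 + q.2)) (y, w) := by
      funext y; rw [hHdef]; simp only; rw [hint y]
    rw [this]
    exact hFs.integral_prod_right'.const_smul Vr⁻¹
  have hHm : Measurable H := hHs.measurable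
  -- key 1 : L¹ distance from mollification
  have habs0 : ∀ (μ : Measure (EE n)) (F : EE n → ℝ), |∫ x, F x ∂μ| ≤ ∫ x, |F x| ∂μ := by
    intro μ F
    simpa [Real.norm_eq_abs] using norm_integral_le_integral_norm (μ := μ) F
  have key1 : (∫⁻ y, ENNReal.ofReal |g y - H y|) ≤ ENNReal.ofReal (Ch * t ^ δ) := by
    have hmeasInner : Measurable fun q : EE n × EE n => ENNReal.ofReal |g q.1 - g (q.1 + q.2)| :=
      ((hgm.comp measurable_fst).sub
        (hgm.comp (measurable_fst.add measurable_snd))).abs.ennreal_ofReal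
    have hptw1 : ∀ y : EE n, ENNReal.ofReal |g y - H y|
        ≤ volB⁻¹ * ∫⁻ w in B0, ENNReal.ofReal |g y - g (y + w)| := by
      intro y
      have hci : IntegrableOn (fun _ : EE n => g y) B0 :=
        integrableOn_const measure_ball_lt_top.ne
      have hint1 : IntegrableOn (fun w => g y - g (y + w)) B0 :=
        hci.sub (hg_transl y).integrableOn
      have hsmul : Vr⁻¹ • (volume.real B0 • g y) = g y := by
        rw [measureReal_def, ← hvolBdef, ← hVrdef, smul_smul, inv_mul_cancel₀ hVr0.ne', one_smul]
      have e1 : g y - H y = Vr⁻¹ • ∫ w in B0, (g y - g (y + w)) := by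
        rw [integral_sub hci (hg_transl y).integrableOn, setIntegral_const, smul_sub, hsmul]
      have e2 : |g y - H y| ≤ Vr⁻¹ * ∫ w in B0, |g y - g (y + w)| := by
        rw [e1, smul_eq_mul, abs_mul, abs_of_nonneg (inv_nonneg.mpr hVr0.le)]
        exact mul_le_mul_of_nonneg_left (habs0 _ _) (inv_nonneg.mpr hVr0.le)
      calc ENNReal.ofReal |g y - H y|
          ≤ ENNReal.ofReal (Vr⁻¹ * ∫ w in B0, |g y - g (y + w)|) := ENNReal.ofReal_le_ofReal e2
        _ = ENNReal.ofReal Vr⁻¹ * ENNReal.ofReal (∫ w in B0, |g y - g (y + w)|) :=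
            ENNReal.ofReal_mul (by positivity)
        _ = volB⁻¹ * ∫⁻ w in B0, ENNReal.ofReal |g y - g (y + w)| := by
            rw [hVinv, ofReal_integral_eq_lintegral_ofReal hint1.abs
              (Filter.Eventually.of_forall fun w => abs_nonneg _)]
    have hw : ∀ w ∈ B0, (∫⁻ y, ENNReal.ofReal |g y - g (y + w)|)
        ≤ ENNReal.ofReal (Ch * t ^ δ) := by
      intro w hwB
      have hwt : ‖w‖ ≤ t := by
        have := mem_ball.mp hwB
        rw [dist_zero_right] at this
        exact this.le
      have hint2 : Integrable fun y => |g y - g (y + w)| := (hg_int.sub (hg_transr w)).abs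
      rw [← ofReal_integral_eq_lintegral_ofReal hint2
        (Filter.Eventually.of_forall fun y => abs_nonneg _)]
      refine ENNReal.ofReal_le_ofReal ?_
      refine (hmodg w).trans ?_
      exact mul_le_mul_of_nonneg_left
        (Real.rpow_le_rpow (norm_nonneg _) hwt hδ0.le) hCh0
    calc (∫⁻ y, ENNReal.ofReal |g y - H y|)
        ≤ ∫⁻ y, volB⁻¹ * ∫⁻ w in B0, ENNReal.ofReal |g y - g (y + w)| := lintegral_mono hptw1
      _ = volB⁻¹ * ∫⁻ y, ∫⁻ w in B0, ENNReal.ofReal |g y - g (y + w)| :=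
          lintegral_const_mul' _ _ hVinv_ne_top
      _ = volB⁻¹ * ∫⁻ w in B0, ∫⁻ y, ENNReal.ofReal |g y - g (y + w)| := by
          rw [lintegral_lintegral_swap hmeasInner.aemeasurable]
      _ ≤ volB⁻¹ * ∫⁻ w in B0, ENNReal.ofReal (Ch * t ^ δ) := by
          exact mul_le_mul_right (setLIntegral_mono' measurableSet_ball hw) _
      _ = volB⁻¹ * (ENNReal.ofReal (Ch * t ^ δ) * volB) := by
          rw [setLIntegral_const, ← hvolBdef]
      _ = ENNReal.ofReal (Ch * t ^ δ) := by
          rw [mul_left_comm, hVcancel, mul_one]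
  -- annulus machinery
  set Ann : EE n → Set (EE n) := fun y => closedBall y (t+a) \ ball y (t-a) with hAnndef
  set Φ : EE n → ℝ≥0∞ := fun y => ∫⁻ u in Ann y, ENNReal.ofReal |g u| with hΦdef
  set G : EE n × EE n → ℝ≥0∞ :=
    fun q => Set.indicator {q : EE n × EE n | dist q.2 q.1 ≤ t+a ∧ ¬ dist q.2 q.1 < t-a}
      (fun q => ENNReal.ofReal |g q.2|) q with hGdef
  have hGset : MeasurableSet {q : EE n × EE n | dist q.2 q.1 ≤ t+a ∧ ¬ dist q.2 q.1 < t-a} := by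
    have hd : Measurable fun q : EE n × EE n => dist q.2 q.1 :=
      (continuous_snd.dist continuous_fst).measurable
    exact (hd measurableSet_Iic).inter ((hd measurableSet_Iio).compl)
  have hGm : Measurable G :=
    (((hgm.comp measurable_snd).abs).ennreal_ofReal).indicator hGset
  have hGΦ : ∀ y : EE n, (∫⁻ u, G (y, u)) = Φ y := by
    intro y
    have e : (fun u => G (y, u)) = (Ann y).indicator (fun u => ENNReal.ofReal |g u|) := by
      funext u
      simp only [hGdef, hAnndef, Set.indicator, Set.mem_diff, mem_closedBall, mem_ball,
        Set.mem_setOf_eq]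
    rw [e, lintegral_indicator (measurableSet_closedBall.diff measurableSet_ball)]
  have hΦm : Measurable Φ := by
    have h1 : Φ = fun y => ∫⁻ u, G (y, u) := by
      funext y; exact (hGΦ y).symm
    rw [h1]; exact hGm.lintegral_prod_right'
  -- pointwise bound for the mollified part
  have hptw : ∀ y z : EE n, ‖y - z‖ ≤ a →
      ENNReal.ofReal |H y - H z| ≤ 2 * volB⁻¹ * Φ y := by
    intro y z hyz
    have hdyz : dist y z ≤ a := by rw [dist_eq_norm]; exact hyz
    have hdzy : dist z y ≤ a := by rw [dist_comm]; exact hdyz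
    have hsub1 : ball y t \ ball z t ⊆ Ann y := by
      rintro u ⟨h1, h2⟩
      rw [mem_ball] at h1
      have h2' : t ≤ dist u z := not_lt.mp (fun hc => h2 (mem_ball.mpr hc))
      refine ⟨mem_closedBall.mpr (by linarith), fun hmem => ?_⟩
      rw [mem_ball] at hmem
      have := dist_triangle u y z
      linarith
    have hsub2 : ball z t \ ball y t ⊆ Ann y := by
      rintro u ⟨h1, h2⟩
      rw [mem_ball] at h1
      have h2' : t ≤ dist u y := not_lt.mp (fun hc => h2 (mem_ball.mpr hc))
      have := dist_triangle u z y
      refine ⟨mem_closedBall.mpr (by linarith), fun hmem => ?_⟩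
      rw [mem_ball] at hmem
      linarith
    have hIy : (∫ u in ball y t ∩ ball z t, g u) + (∫ u in ball y t \ ball z t, g u)
        = ∫ u in ball y t, g u :=
      integral_inter_add_diff measurableSet_ball hg_int.integrableOn
    have hIz : (∫ u in ball z t ∩ ball y t, g u) + (∫ u in ball z t \ ball y t, g u)
        = ∫ u in ball z t, g u :=
      integral_inter_add_diff measurableSet_ball hg_int.integrableOn
    have hdiff : (∫ u in ball y t, g u) - (∫ u in ball z t, g u)
        = (∫ u in ball y t \ ball z t, g u) - (∫ u in ball z t \ ball y t, g u) := by
      rw [← hIy, ← hIz, Set.inter_comm]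
      ring
    have hAnnInt : IntegrableOn (fun u => |g u|) (Ann y) := hg_int.abs.integrableOn
    have b1 : |∫ u in ball y t \ ball z t, g u| ≤ ∫ u in Ann y, |g u| :=
      (habs0 _ _).trans (setIntegral_mono_set hAnnInt
        (Filter.Eventually.of_forall fun u => abs_nonneg _)
        (HasSubset.Subset.eventuallyLE hsub1))
    have b2 : |∫ u in ball z t \ ball y t, g u| ≤ ∫ u in Ann y, |g u| :=
      (habs0 _ _).trans (setIntegral_mono_set hAnnInt
        (Filter.Eventually.of_forall fun u => abs_nonneg _)
        (HasSubset.Subset.eventuallyLE hsub2))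
    have habs : |(∫ u in ball y t, g u) - (∫ u in ball z t, g u)|
        ≤ 2 * ∫ u in Ann y, |g u| := by
      rw [hdiff]
      have := abs_sub (∫ u in ball y t \ ball z t, g u) (∫ u in ball z t \ ball y t, g u)
      calc |(∫ u in ball y t \ ball z t, g u) - ∫ u in ball z t \ ball y t, g u|
          ≤ |∫ u in ball y t \ ball z t, g u| + |∫ u in ball z t \ ball y t, g u| :=
            abs_sub _ _
        _ ≤ 2 * ∫ u in Ann y, |g u| := by linarith
    have e1 : H y - H z = Vr⁻¹ • ((∫ u in ball y t, g u) - ∫ u in ball z t, g u) := by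
      rw [hHdef]
      simp only
      rw [cov y, cov z, smul_sub]
    have e2 : |H y - H z| ≤ Vr⁻¹ * (2 * ∫ u in Ann y, |g u|) := by
      rw [e1, smul_eq_mul, abs_mul, abs_of_nonneg (inv_nonneg.mpr hVr0.le)]
      exact mul_le_mul_of_nonneg_left habs (inv_nonneg.mpr hVr0.le)
    have hAnnNN : (0:ℝ) ≤ ∫ u in Ann y, |g u| :=
      setIntegral_nonneg (measurableSet_closedBall.diff measurableSet_ball)
        (fun u _ => abs_nonneg _)
    calc ENNReal.ofReal |H y - H z|
        ≤ ENNReal.ofReal (Vr⁻¹ * (2 * ∫ u in Ann y, |g u|)) := ENNReal.ofReal_le_ofReal e2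
      _ = ENNReal.ofReal Vr⁻¹ * (ENNReal.ofReal 2 * ENNReal.ofReal (∫ u in Ann y, |g u|)) := by
          rw [ENNReal.ofReal_mul (by positivity), ENNReal.ofReal_mul (by norm_num)]
      _ = 2 * volB⁻¹ * Φ y := by
          rw [hVinv, ofReal_integral_eq_lintegral_ofReal hAnnInt
            (Filter.Eventually.of_forall fun u => abs_nonneg _), hΦdef]
          simp only [ENNReal.ofReal_ofNat]
          ring
  -- annulus volume bound
  have hannvol : ∀ u : EE n, volume (Ann u) ≤ ENNReal.ofReal ((n:ℝ) * 2^n * s) * volB := by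
    have hreal : (t+a)^n - (t-a)^n ≤ (n:ℝ) * 2^n * s * t^n := by
      obtain ⟨m, rfl⟩ : ∃ m, n = m + 1 := ⟨n-1, (Nat.succ_pred_eq_of_pos hn).symm⟩
      have h1 := aux_pow_sub_pow m (t+a) (t-a) (by linarith) (by linarith)
      have h2 : (t+a)^m ≤ (2*t)^m := pow_le_pow_left₀ (by linarith) (by linarith) m
      have h3 : ((m:ℝ)+1) * (t+a)^m * ((t+a)-(t-a)) ≤ ((m:ℝ)+1) * (2*t)^m * (2*(s*t)) := by
        have e2 : (t+a)-(t-a) = 2*a := by ring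
        rw [e2]
        have hm0 : (0:ℝ) ≤ (m:ℝ)+1 := by positivity
        refine mul_le_mul (mul_le_mul le_rfl h2 (by positivity) hm0) (by linarith)
          (by linarith) (by positivity)
      refine (h1.trans h3).trans (le_of_eq ?_)
      rw [mul_pow]
      push_cast
      ring
    intro u
    have hsub : ball u (t-a) ⊆ closedBall u (t+a) :=
      (ball_subset_ball (by linarith)).trans ball_subset_closedBall
    have hd : volume (Ann u) = volume (closedBall u (t+a)) - volume (ball u (t-a)) := by
      exact measure_diff hsub measurableSet_ball.nullMeasurableSet measure_ball_lt_top.ne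
    have hr1 : (0:ℝ) ≤ t+a := by linarith
    have hr2 : (0:ℝ) ≤ t-a := by linarith
    rw [hd, hcball u (t+a) hr1, hball u (t-a) hr2]
    have step1 : ENNReal.ofReal ((t+a)^n) * ω - ENNReal.ofReal ((t-a)^n) * ω
        ≤ ENNReal.ofReal ((n:ℝ) * 2^n * s * t^n) * ω := by
      refine tsub_le_iff_right.mpr ?_
      rw [← add_mul]
      refine mul_le_mul_left ?_ ω
      have e3 : (t+a)^n = ((t+a)^n - (t-a)^n) + (t-a)^n := by ring
      calc ENNReal.ofReal ((t+a)^n)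
          = ENNReal.ofReal (((t+a)^n - (t-a)^n) + (t-a)^n) := by rw [← e3]
        _ ≤ ENNReal.ofReal ((t+a)^n - (t-a)^n) + ENNReal.ofReal ((t-a)^n) :=
            ENNReal.ofReal_add_le
        _ ≤ ENNReal.ofReal ((n:ℝ) * 2^n * s * t^n) + ENNReal.ofReal ((t-a)^n) := by
            exact add_le_add_left (ENNReal.ofReal_le_ofReal hreal) _
    refine step1.trans (le_of_eq ?_)
    rw [ENNReal.ofReal_mul (by positivity), mul_assoc, ← hball 0 t ht0.le]
  -- middle term
  -- a.e. facts on Ξ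
  have hae : ∀ᵐ p ∂Ξ, f p.1 = g p.1 ∧ f p.2 = g p.2 ∧ ‖p.1 - p.2‖ ≤ a := by
    obtain ⟨N, hNsub, hNmeas, hNnull⟩ := exists_measurable_superset_of_null (ae_iff.mp hhg)
    have hmap : ∀ (π : EE n × EE n → EE n), Measurable π →
        Ξ.map π ≤ (ENNReal.ofReal C₂) • volume → Ξ (π ⁻¹' N) = 0 := by
      intro π hπ hle
      have h1 : Ξ.map π N ≤ (ENNReal.ofReal C₂) • (volume : Measure (EE n)) N :=
        Measure.le_iff'.mp hle N
      rw [Measure.map_apply hπ hNmeas] at h1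
      simp only [Measure.smul_apply, smul_eq_mul, hNnull, mul_zero] at h1
      exact le_antisymm h1 zero_le
    have h1 : ∀ᵐ p ∂Ξ, p.1 ∉ N := by
      rw [ae_iff]
      refine measure_mono_null ?_ (hmap Prod.fst measurable_fst hfst)
      intro p hp; simpa using hp
    have h2 : ∀ᵐ p ∂Ξ, p.2 ∉ N := by
      rw [ae_iff]
      refine measure_mono_null ?_ (hmap Prod.snd measurable_snd hsnd)
      intro p hp; simpa using hp
    have h3 : ∀ᵐ p ∂Ξ, ‖p.1‖ ≤ C₁ ∧ ‖p.2‖ ≤ C₁ ∧ ‖p.1 - p.2‖ ≤ C₁ * ζ := ae_iff.mpr hsupp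
    filter_upwards [h1, h2, h3] with p hp1 hp2 hp3
    refine ⟨?_, ?_, hp3.2.2⟩
    · by_contra hne; exact hp1 (hNsub hne)
    · by_contra hne; exact hp2 (hNsub hne)
  have hswap : (∫⁻ y, Φ y) = ∫⁻ u, ENNReal.ofReal |g u| * volume (Ann u) := by
    have h1 : (∫⁻ y, Φ y) = ∫⁻ y, ∫⁻ u, G (y, u) :=
      lintegral_congr fun y => (hGΦ y).symm
    rw [h1, lintegral_lintegral_swap hGm.aemeasurable]
    refine lintegral_congr fun u => ?_
    have e : (fun y => G (y, u)) = (Ann u).indicator (fun _ => ENNReal.ofReal |g u|) := by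
      funext y
      simp only [hGdef, hAnndef, Set.indicator, Set.mem_setOf_eq, Set.mem_diff,
        mem_closedBall, mem_ball, dist_comm u y]
    rw [e, lintegral_indicator (measurableSet_closedBall.diff measurableSet_ball),
      setLIntegral_const]
  have key2 : (∫⁻ p, ENNReal.ofReal |H p.1 - H p.2| ∂Ξ)
      ≤ ENNReal.ofReal (C₂ * (2 * ((n:ℝ) * 2^n * s) * L)) := by
    have h2ne : (2 : ℝ≥0∞) * volB⁻¹ ≠ ⊤ := ENNReal.mul_ne_top (by norm_num) hVinv_ne_top
    have hL : (∫⁻ u, ENNReal.ofReal |g u|) = ENNReal.ofReal L := by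
      rw [← ofReal_integral_eq_lintegral_ofReal hg_int.abs
        (Filter.Eventually.of_forall fun u => abs_nonneg _), hgL]
    calc (∫⁻ p, ENNReal.ofReal |H p.1 - H p.2| ∂Ξ)
        ≤ ∫⁻ p, 2 * volB⁻¹ * Φ p.1 ∂Ξ := by
          refine lintegral_mono_ae ?_
          filter_upwards [hae] with p hp
          exact hptw p.1 p.2 hp.2.2
      _ = 2 * volB⁻¹ * ∫⁻ p, Φ p.1 ∂Ξ := lintegral_const_mul' _ _ h2ne
      _ = 2 * volB⁻¹ * ∫⁻ y, Φ y ∂(Ξ.map Prod.fst) := by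
          rw [lintegral_map hΦm measurable_fst]
      _ ≤ 2 * volB⁻¹ * ∫⁻ y, Φ y ∂((ENNReal.ofReal C₂) • volume) :=
          mul_le_mul_right (lintegral_mono' hfst le_rfl) _
      _ = 2 * volB⁻¹ * (ENNReal.ofReal C₂ * ∫⁻ y, Φ y) := by rw [lintegral_smul_measure, smul_eq_mul]
      _ = 2 * volB⁻¹ * (ENNReal.ofReal C₂ * ∫⁻ u, ENNReal.ofReal |g u| * volume (Ann u)) := by
          rw [hswap]
      _ ≤ 2 * volB⁻¹ * (ENNReal.ofReal C₂
            * ∫⁻ u, ENNReal.ofReal |g u| * (ENNReal.ofReal ((n:ℝ) * 2^n * s) * volB)) := by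
          refine mul_le_mul_right (mul_le_mul_right (lintegral_mono fun u => ?_) _) _
          exact mul_le_mul_right (hannvol u) _
      _ = 2 * volB⁻¹ * (ENNReal.ofReal C₂
            * ((∫⁻ u, ENNReal.ofReal |g u|) * (ENNReal.ofReal ((n:ℝ) * 2^n * s) * volB))) := by
          rw [lintegral_mul_const' _ _ (ENNReal.mul_ne_top ENNReal.ofReal_ne_top hvolB_ne_top)]
      _ = (volB⁻¹ * volB) * (2 * ENNReal.ofReal C₂
            * ENNReal.ofReal ((n:ℝ) * 2^n * s) * ENNReal.ofReal L) := by
          rw [hL]; ring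
      _ = ENNReal.ofReal (C₂ * (2 * ((n:ℝ) * 2^n * s) * L)) := by
          rw [hVcancel, one_mul]
          rw [show (2:ℝ≥0∞) = ENNReal.ofReal 2 from (ENNReal.ofReal_ofNat 2).symm,
            ← ENNReal.ofReal_mul (by norm_num), ← ENNReal.ofReal_mul (by positivity),
            ← ENNReal.ofReal_mul (by positivity)]
          congr 1
          ring
  -- outer terms
  have key3 : ∀ (π : EE n × EE n → EE n), Measurable π → Ξ.map π ≤ (ENNReal.ofReal C₂) • volume →
      (∫⁻ p, ENNReal.ofReal |g (π p) - H (π p)| ∂Ξ) ≤ ENNReal.ofReal (C₂ * (Ch * t ^ δ)) := by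
    intro π hπ hle
    calc (∫⁻ p, ENNReal.ofReal |g (π p) - H (π p)| ∂Ξ)
        = ∫⁻ y, ENNReal.ofReal |g y - H y| ∂(Ξ.map π) :=
          (lintegral_map ((hgm.sub hHm).abs.ennreal_ofReal) hπ).symm
      _ ≤ ∫⁻ y, ENNReal.ofReal |g y - H y| ∂((ENNReal.ofReal C₂) • volume) :=
          lintegral_mono' hle le_rfl
      _ = ENNReal.ofReal C₂ * ∫⁻ y, ENNReal.ofReal |g y - H y| := lintegral_smul_measure _ _
      _ ≤ ENNReal.ofReal C₂ * ENNReal.ofReal (Ch * t ^ δ) := by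
          exact mul_le_mul_right key1 _
      _ = ENNReal.ofReal (C₂ * (Ch * t ^ δ)) := (ENNReal.ofReal_mul hC₂.le).symm
  -- main decomposition
  have main : (∫⁻ p, ENNReal.ofReal |f p.1 - f p.2| ∂Ξ)
      ≤ (∫⁻ p, ENNReal.ofReal |g p.1 - H p.1| ∂Ξ)
        + ((∫⁻ p, ENNReal.ofReal |H p.1 - H p.2| ∂Ξ)
          + (∫⁻ p, ENNReal.ofReal |g p.2 - H p.2| ∂Ξ)) := by
    have hm1 : Measurable fun p : EE n × EE n => ENNReal.ofReal |g p.1 - H p.1| :=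
      ((hgm.comp measurable_fst).sub (hHm.comp measurable_fst)).abs.ennreal_ofReal
    have hm2 : Measurable fun p : EE n × EE n => ENNReal.ofReal |H p.1 - H p.2| :=
      ((hHm.comp measurable_fst).sub (hHm.comp measurable_snd)).abs.ennreal_ofReal
    calc (∫⁻ p, ENNReal.ofReal |f p.1 - f p.2| ∂Ξ)
        ≤ ∫⁻ p, (ENNReal.ofReal |g p.1 - H p.1| + (ENNReal.ofReal |H p.1 - H p.2|
            + ENNReal.ofReal |g p.2 - H p.2|)) ∂Ξ := by
          refine lintegral_mono_ae ?_
          filter_upwards [hae] with p hp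
          obtain ⟨e1, e2, -⟩ := hp
          rw [e1, e2]
          have t1 := abs_sub_le (g p.1) (H p.1) (g p.2)
          have t2 := abs_sub_le (H p.1) (H p.2) (g p.2)
          have t3 : |H p.2 - g p.2| = |g p.2 - H p.2| := abs_sub_comm _ _
          have tri : |g p.1 - g p.2|
              ≤ |g p.1 - H p.1| + (|H p.1 - H p.2| + |g p.2 - H p.2|) := by linarith
          calc ENNReal.ofReal |g p.1 - g p.2|
              ≤ ENNReal.ofReal (|g p.1 - H p.1| + (|H p.1 - H p.2| + |g p.2 - H p.2|)) :=
                ENNReal.ofReal_le_ofReal tri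
            _ ≤ _ := ENNReal.ofReal_add_le.trans (add_le_add le_rfl ENNReal.ofReal_add_le)
      _ = _ := by rw [lintegral_add_left hm1, lintegral_add_left hm2]
  -- conclusion
  have final : ENNReal.ofReal (C₂ * (Ch * t ^ δ))
      + (ENNReal.ofReal (C₂ * (2 * ((n:ℝ) * 2^n * s) * L))
        + ENNReal.ofReal (C₂ * (Ch * t ^ δ)))
      ≤ ENNReal.ofReal (A * ζ ^ (δ/2) * (L + Ch)) := by
    have hsδ : s ^ δ = ζ ^ (δ/2) := by
      rw [hsdef, ← Real.rpow_mul hζ0.le]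
      ring_nf
    have htδ : t ^ δ = K ^ δ * ζ ^ (δ/2) := by
      rw [htdef, Real.mul_rpow hK0.le hs0.le, hsδ]
    have hq0 : 0 < ζ ^ (δ/2) := Real.rpow_pos_of_pos hζ0 _
    have hsle : s ≤ ζ ^ (δ/2) := by
      rw [hsdef]
      exact Real.rpow_le_rpow_of_exponent_ge hζ0 hζ1 (by linarith)
    rw [← ENNReal.ofReal_add (by positivity) (by positivity),
        ← ENNReal.ofReal_add (by positivity) (by positivity)]
    refine ENNReal.ofReal_le_ofReal ?_
    rw [htδ]
    set q : ℝ := ζ ^ (δ/2) with hqdef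
    have h1 : C₂*(2*((n:ℝ)*2^n*s)*L) ≤ 2*C₂*(n:ℝ)*2^n*q*L := by
      calc C₂*(2*((n:ℝ)*2^n*s)*L) = (2*C₂*(n:ℝ)*2^n*L)*s := by ring
        _ ≤ (2*C₂*(n:ℝ)*2^n*L)*q := mul_le_mul_of_nonneg_left hsle (by positivity)
        _ = 2*C₂*(n:ℝ)*2^n*q*L := by ring
    have h2 : 0 ≤ 2*C₂*K^δ*q*L := by positivity
    have h3 : 0 ≤ 2*C₂*(n:ℝ)*2^n*q*Ch := by positivity
    have he : A*q*(L+Ch) = 2*C₂*K^δ*q*L + 2*C₂*K^δ*q*Ch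
        + (2*C₂*(n:ℝ)*2^n*q*L + 2*C₂*(n:ℝ)*2^n*q*Ch) := by
      rw [hAdef]; ring
    have he2 : C₂*(Ch*(K^δ*q)) + C₂*(Ch*(K^δ*q)) = 2*C₂*K^δ*q*Ch := by ring
    linarith
  calc (∫⁻ p, ENNReal.ofReal |f p.1 - f p.2| ∂Ξ)
      ≤ _ := main
    _ ≤ ENNReal.ofReal (C₂ * (Ch * t ^ δ))
        + (ENNReal.ofReal (C₂ * (2 * ((n:ℝ) * 2^n * s) * L))
          + ENNReal.ofReal (C₂ * (Ch * t ^ δ))) := by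
        exact add_le_add (key3 Prod.fst measurable_fst hfst)
          (add_le_add key2 (key3 Prod.snd measurable_snd hsnd))
    _ ≤ _ := final
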